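/- If R is an invertible series satisfying the formal conservation law equation D_t(R) + F†R + RF = 0 and G satisfies the Lax equation D_t(G) = [F,G], then the series Ḡ := −(R G R^{-1})† satisfies the Lax equation D_t(Ḡ) = [F, Ḡ]. -/
import Mathlib


/-- in the (twisted Laurent series) ring, if `R` is invertible
and satisfies the formal conservation law equation `D_t(R) + F†R + RF = 0`
and `G` satisfies the Lax equation `D_t(G) = [F,G]`, then
`Ḡ := −(R G R⁻¹)†` also satisfies the Lax equation `D_t(Ḡ) = [F,Ḡ]`.
Here `D` is a derivation and `†` is an involutive antihomomorphism
commuting with `D`. -/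
theorem conjugated_solution_of_Lax
    {L : Type*} [Ring L] (D : L →+ L)
    (hLeib : ∀ x y : L, D (x * y) = D x * y + x * D y)
    (dag : L →+ L)
    (hdagmul : ∀ x y : L, dag (x * y) = dag y * dag x)
    (hdaginv : ∀ x : L, dag (dag x) = x)
    (hDdag : ∀ x : L, D (dag x) = dag (D x))
    (F G R Rinv : L) (hR : R * Rinv = 1) (hR' : Rinv * R = 1)
    (hReq : D R + dag F * R + R * F = 0)
    (hG : D G = F * G - G * F) :
    D (-(dag (R * G * Rinv)))
      = F * (-(dag (R * G * Rinv))) - (-(dag (R * G * Rinv))) * F := by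
  have hDR : D R = -(dag F * R) - R * F := by
    have h := hReq
    rw [add_assoc, add_eq_zero_iff_eq_neg] at h
    rw [h]; abel
  have hD1 : D (1 : L) = 0 := by
    have := hLeib 1 1
    simpa using this
  have h2 : D Rinv * R + Rinv * D R = 0 := by
    rw [← hLeib, hR', hD1]
  have hDRinv : D Rinv = Rinv * dag F + F * Rinv := by
    have h3 := congrArg (· * Rinv) h2
    simp only [add_mul, mul_assoc, hR, mul_one, zero_mul] at h3
    have h4 : D Rinv = -(Rinv * (D R * Rinv)) := by
      rw [add_eq_zero_iff_eq_neg] at h3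
      exact h3
    rw [h4, hDR]
    simp only [sub_mul, neg_mul, mul_sub, mul_neg, neg_sub, neg_neg]
    rw [mul_assoc (dag F) R Rinv, hR, mul_one, sub_neg_eq_add, add_comm,
      mul_assoc R F Rinv, ← mul_assoc Rinv R, hR', one_mul]
  have hkey : D (R * G * Rinv)
      = (R * G * Rinv) * dag F - dag F * (R * G * Rinv) := by
    rw [hLeib, hLeib, hDR, hG, hDRinv]
    noncomm_ring
  have := hDdag (R * G * Rinv)
  rw [map_neg, this, hkey, map_sub, hdagmul (R * G * Rinv) (dag F),
    hdagmul (dag F) (R * G * Rinv), hdaginv]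
  noncomm_ring
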